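/- Fix an integer m ≥ 1 and, treating n as a real variable, define the function D(n) = log(1 + 1/(1 + (1+m)(1+n)/2)) − (1/(1+m)) · [ (m/(1+m)) · (−log(1 − 1/(1 + (1+n)/2))) + (1/(1+m)) · (−log(1 − 1/(2 + (1+n)/2))) ] for n ≥ 3. Then dD/dn < 0 for all real n ≥ 3; in particular, since this is the risk difference Δ_{p*}(1,1) when N = 1, the estimator p̂ does not dominate p̃ when N = 1. -/

import Mathlib

set_option maxHeartbeats 1000000

theorem no_dominance_N_eq_one (m : ℕ) (hm : 1 ≤ m) :
    ∀ x : ℝ, 3 ≤ x →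
      deriv
        (fun n : ℝ =>
          Real.log (1 + 1 / (1 + (1 + (m : ℝ)) * (1 + n) / 2)) -
            1 / (1 + (m : ℝ)) *
              ((m : ℝ) / (1 + (m : ℝ)) * (- Real.log (1 - 1 / (1 + (1 + n) / 2))) +
                1 / (1 + (m : ℝ)) * (- Real.log (1 - 1 / (2 + (1 + n) / 2))))) x < 0 := by
  intro x hx
  have hm' : (1:ℝ) ≤ (m:ℝ) := by exact_mod_cast hm
  set c : ℝ := (m:ℝ) with hc
  have hM : (0:ℝ) < 1 + c := by linarith
  set g : ℝ → ℝ := fun n =>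
    (Real.log (2 + (1 + c) * (1 + n) / 2) - Real.log (1 + (1 + c) * (1 + n) / 2)) -
      1 / (1 + c) *
        (c / (1 + c) * (Real.log (1 + (1 + n) / 2) - Real.log ((1 + n) / 2)) +
          1 / (1 + c) * (Real.log (2 + (1 + n) / 2) - Real.log (1 + (1 + n) / 2))) with hg
  have hEq : (fun n : ℝ =>
          Real.log (1 + 1 / (1 + (1 + c) * (1 + n) / 2)) -
            1 / (1 + c) *
              (c / (1 + c) * (- Real.log (1 - 1 / (1 + (1 + n) / 2))) +
                1 / (1 + c) * (- Real.log (1 - 1 / (2 + (1 + n) / 2))))) =ᶠ[nhds x] g := by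
    filter_upwards [isOpen_Ioi.mem_nhds (show x ∈ Set.Ioi (1:ℝ) from by
      simp only [Set.mem_Ioi]; linarith)] with n hn
    simp only [Set.mem_Ioi] at hn
    have h1 : (0:ℝ) < (1+n)/2 := by linarith
    have h2 : (0:ℝ) < 1 + (1+n)/2 := by linarith
    have h3 : (0:ℝ) < 2 + (1+n)/2 := by linarith
    have h4 : (0:ℝ) < 1 + (1+c)*(1+n)/2 := by nlinarith
    have h5 : (0:ℝ) < 2 + (1+c)*(1+n)/2 := by nlinarith
    have e1 : 1 + 1 / (1 + (1+c)*(1+n)/2) = (2 + (1+c)*(1+n)/2) / (1 + (1+c)*(1+n)/2) := by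
      field_simp; ring
    have e2 : 1 - 1 / (1 + (1+n)/2) = ((1+n)/2) / (1 + (1+n)/2) := by
      field_simp; ring
    have e3 : 1 - 1 / (2 + (1+n)/2) = (1 + (1+n)/2) / (2 + (1+n)/2) := by
      field_simp; ring
    rw [hg]
    simp only [e1, e2, e3, Real.log_div h5.ne' h4.ne', Real.log_div h1.ne' h2.ne',
      Real.log_div h2.ne' h3.ne']
    ring
  rw [hEq.deriv_eq]
  have ht1 : (0:ℝ) < (1+x)/2 := by linarith
  have ht2 : (0:ℝ) < 1 + (1+x)/2 := by linarith
  have ht3 : (0:ℝ) < 2 + (1+x)/2 := by linarith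
  have ht4 : (0:ℝ) < 1 + (1+c)*(1+x)/2 := by nlinarith
  have ht5 : (0:ℝ) < 2 + (1+c)*(1+x)/2 := by nlinarith
  have hlin1 : HasDerivAt (fun n : ℝ => (1 + c) * (1 + n) / 2) ((1 + c)/2) x := by
    simpa using (((hasDerivAt_id x).const_add (1:ℝ)).const_mul (1 + c)).div_const 2
  have hlin2 : HasDerivAt (fun n : ℝ => (1 + n) / 2) ((1:ℝ)/2) x := by
    simpa using ((hasDerivAt_id x).const_add (1:ℝ)).div_const 2
  have hA1 : HasDerivAt (fun n : ℝ => Real.log (2 + (1+c)*(1+n)/2))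
      (((1+c)/2) / (2 + (1+c)*(1+x)/2)) x := (hlin1.const_add 2).log ht5.ne'
  have hA2 : HasDerivAt (fun n : ℝ => Real.log (1 + (1+c)*(1+n)/2))
      (((1+c)/2) / (1 + (1+c)*(1+x)/2)) x := (hlin1.const_add 1).log ht4.ne'
  have hB1 : HasDerivAt (fun n : ℝ => Real.log (1 + (1+n)/2))
      (((1:ℝ)/2) / (1 + (1+x)/2)) x := (hlin2.const_add 1).log ht2.ne'
  have hB2 : HasDerivAt (fun n : ℝ => Real.log ((1+n)/2))
      (((1:ℝ)/2) / ((1+x)/2)) x := hlin2.log ht1.ne'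
  have hC1 : HasDerivAt (fun n : ℝ => Real.log (2 + (1+n)/2))
      (((1:ℝ)/2) / (2 + (1+x)/2)) x := (hlin2.const_add 2).log ht3.ne'
  have hg' : HasDerivAt g
      ((((1+c)/2) / (2 + (1+c)*(1+x)/2) - ((1+c)/2) / (1 + (1+c)*(1+x)/2)) -
        1/(1+c) * (c/(1+c) * (((1:ℝ)/2) / (1 + (1+x)/2) - ((1:ℝ)/2) / ((1+x)/2)) +
          1/(1+c) * (((1:ℝ)/2) / (2 + (1+x)/2) - ((1:ℝ)/2) / (1 + (1+x)/2)))) x := by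
    rw [hg]
    exact (hA1.sub hA2).sub
      ((((hB1.sub hB2).const_mul (c/(1+c))).add
        ((hC1.sub hB1).const_mul (1/(1+c)))).const_mul (1/(1+c)))
  rw [hg'.deriv]
  set D : ℝ := (((1+c)/2) / (2 + (1+c)*(1+x)/2) - ((1+c)/2) / (1 + (1+c)*(1+x)/2)) -
        1/(1+c) * (c/(1+c) * (((1:ℝ)/2) / (1 + (1+x)/2) - ((1:ℝ)/2) / ((1+x)/2)) +
          1/(1+c) * (((1:ℝ)/2) / (2 + (1+x)/2) - ((1:ℝ)/2) / (1 + (1+x)/2))) with hD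
  set Q : ℝ := (2 + (1+c)*(1+x)/2) * (1 + (1+c)*(1+x)/2) * ((1+x)/2) * (1 + (1+x)/2) *
      (2 + (1+x)/2) * (1+c)^2 with hQdef
  have hQ : 0 < Q := by rw [hQdef]; positivity
  have hP : D * Q = -(c/2) * ((1+c)^2*((1+x)/2)^2 + 2*(1+c)*(c-1)*((1+x)/2) - 4) := by
    rw [hD, hQdef]
    field_simp
    ring
  by_contra hcon
  push_neg at hcon
  have h0 : 0 ≤ D * Q := mul_nonneg hcon hQ.le
  rw [hP] at h0
  have ht : (2:ℝ) ≤ (1+x)/2 := by linarith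
  nlinarith [ht, hm', mul_le_mul ht ht (by norm_num) (by linarith : (0:ℝ) ≤ (1+x)/2),
    mul_nonneg (mul_nonneg (by linarith : (0:ℝ) ≤ 1+c) (by linarith : (0:ℝ) ≤ c-1)) ht1.le]
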